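/- arXiv:2106.05360 — 2 statements merged into one kernel-verified Lean document; each statement's English description precedes it below -/
import Mathlib

section
/- Suppose every project has unit cost (cost(p)=1 for all p∈A) and every voter's marginal utilities are strictly positive (u_{i,g}(k) > 0 for all i∈V, g∈v_i, and all k); then the Substitute Rule X (SRX) mechanism satisfies Strong-BPJR with substitutes: for every such PB instance and every group S⊆V that is T-cohesive with substitutes for T⊆A, the output bundle B of SRX satisfies |(∪_{i∈S} A(i)) ∩ B| ≥ |T|. -/
open Finset

/-- A voter's preference: a partition of her desired projects into groups of
substitutes, together with a marginal utility function per group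
(`margU g j` is the marginal utility of the `j`-th funded project of group `g`). -/
structure VoterPref (A : Type*) [DecidableEq A] where
  parts : Finset (Finset A)
  margU : Finset A → ℕ → ℝ

namespace VoterPref

variable {A : Type*} [DecidableEq A]

/-- `A(i)` : the set of desired projects of the voter. -/
def desired (v : VoterPref A) : Finset A := v.parts.sup id

/-- Well-formedness: groups are nonempty and pairwise disjoint, and marginal
utilities are nonnegative and nonincreasing. -/
def Valid (v : VoterPref A) : Prop :=
  (∀ g ∈ v.parts, g.Nonempty) ∧
  (∀ g₁ ∈ v.parts, ∀ g₂ ∈ v.parts, g₁ ≠ g₂ → Disjoint g₁ g₂) ∧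
  (∀ g ∈ v.parts, ∀ j : ℕ, 0 ≤ v.margU g j) ∧
  (∀ g ∈ v.parts, ∀ j : ℕ, v.margU g (j + 1) ≤ v.margU g j)

/-- The utility of a bundle `B`:  `u_i(B) = Σ_{g} Σ_{j=1}^{|g∩B|} u_{i,g}(j)`. -/
def util (v : VoterPref A) (B : Finset A) : ℝ :=
  ∑ g ∈ v.parts, ∑ j ∈ Finset.Icc 1 (g ∩ B).card, v.margU g j

/-- Marginal utility of project `p` given the already selected bundle `B`. -/
def margUtil (v : VoterPref A) (B : Finset A) (p : A) : ℝ :=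
  v.util (insert p B) - v.util B

/-- `p₁` and `p₂` are substitutes for the voter. -/
def sameGroup (v : VoterPref A) (p₁ p₂ : A) : Prop :=
  ∃ g ∈ v.parts, p₁ ∈ g ∧ p₂ ∈ g

end VoterPref

/-- A participatory budgeting instance `E = (V, A, cost, L)` together with the
voters' preferences. -/
structure PB (V A : Type*) [DecidableEq A] where
  cost : A → ℝ
  budget : ℝ
  pref : V → VoterPref A

noncomputable section
open scoped Classical

variable {V A : Type*} [Fintype V] [Fintype A] [DecidableEq A]

/-- `S` is `T`-cohesive with substitutes: `S` can afford `T` with its share of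
the budget, every voter in `S` desires every project of `T`, and no two
distinct projects of `T` are substitutes for any voter of `S`. -/
def TCohesiveSub (E : PB V A) (S : Finset V) (T : Finset A) : Prop :=
  (∑ p ∈ T, E.cost p) ≤ (E.budget / (Fintype.card V : ℝ)) * S.card ∧
  (∀ i ∈ S, T ⊆ (E.pref i).desired) ∧
  (∀ i ∈ S, ∀ p₁ ∈ T, ∀ p₂ ∈ T, p₁ ≠ p₂ → ¬ (E.pref i).sameGroup p₁ p₂)

/-- `p` is `q`-affordable given remaining budgets `b` and current utilities `U`. -/
def Affordable (E : PB V A) (U : V → A → ℝ) (b : V → ℝ) (p : A) (q : ℝ) : Prop :=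
  0 ≤ q ∧ E.cost p ≤ ∑ i, min (b i) (U i p * q)

/-- The minimal `q` for which `p` is `q`-affordable (junk value if none exists). -/
def qmin (E : PB V A) (U : V → A → ℝ) (b : V → ℝ) (p : A) : ℝ :=
  sInf {q | Affordable E U b p q}

/-- The set of unselected projects that are `q`-affordable for some `q`. -/
def affordSet (E : PB V A) (U : V → A → ℝ) (b : V → ℝ) (B : Finset A) : Finset A :=
  Finset.univ.filter fun p => p ∉ B ∧ ∃ q, Affordable E U b p q

/-- The project chosen at the current step: among affordable unselected
projects, minimize the minimal `q`, breaking ties by the (lexicographic)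
linear order on `A`; `none` if no project is affordable. -/
def choice [LinearOrder A] (E : PB V A) (U : V → A → ℝ) (b : V → ℝ) (B : Finset A) :
    Option A :=
  if h : (affordSet E U b B).Nonempty then
    some (((affordSet E U b B).filter fun p =>
        qmin E U b p = (affordSet E U b B).inf' h (qmin E U b)).min'
      (by
        obtain ⟨p, hp, hq⟩ := Finset.exists_mem_eq_inf' h (qmin E U b)
        exact ⟨p, Finset.mem_filter.mpr ⟨hp, hq.symm⟩⟩))
  else none

/-- The state (selected bundle, remaining budgets) of the generalized Rule X
after `t` steps, where `Ufun B i p` is the utility voter `i` assigns to project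
`p` when the bundle `B` has already been selected. -/
def state [LinearOrder A] (E : PB V A) (Ufun : Finset A → V → A → ℝ) :
    ℕ → Finset A × (V → ℝ)
  | 0 => (∅, fun _ => E.budget / (Fintype.card V : ℝ))
  | t + 1 =>
    let st := state E Ufun t
    match choice E (Ufun st.1) st.2 st.1 with
    | none => st
    | some p =>
        (insert p st.1,
          fun i => st.2 i - min (st.2 i) (Ufun st.1 i p * qmin E (Ufun st.1) st.2 p))

/-- The output of the generalized Rule X (after `|A|` steps the state is final). -/
def mechOutput [LinearOrder A] (E : PB V A) (Ufun : Finset A → V → A → ℝ) : Finset A :=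
  (state E Ufun (Fintype.card A)).1

/-- SRX uses, at every step, the current marginal utilities. -/
def srxU (E : PB V A) : Finset A → V → A → ℝ := fun B i p => (E.pref i).margUtil B p

/-- The Substitute Rule X mechanism. -/
def SRX [LinearOrder A] (E : PB V A) : Finset A := mechOutput E (srxU E)

/-- Rule X uses, throughout, utility 1 for every desired project. -/
def rxU (E : PB V A) : Finset A → V → A → ℝ :=
  fun _ i p => if p ∈ (E.pref i).desired then 1 else 0

/-- The (original) Rule X mechanism. -/
def RX [LinearOrder A] (E : PB V A) : Finset A := mechOutput E (rxU E)

/-- Global substitutes: all voters share one common partition `P` of the whole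
project set, each voter approving a sub-collection of its groups. -/
def GlobalSubs (E : PB V A) (P : Finset (Finset A)) : Prop :=
  (∀ g ∈ P, g.Nonempty) ∧
  (∀ g₁ ∈ P, ∀ g₂ ∈ P, g₁ ≠ g₂ → Disjoint g₁ g₂) ∧
  P.sup id = Finset.univ ∧
  (∀ i : V, (E.pref i).parts ⊆ P)

end

noncomputable section AuxLemmas
open scoped Classical

variable {V A : Type*} [Fintype V] [Fintype A] [DecidableEq A]

lemma aux_margUtil_nonneg (v : VoterPref A) (hv : v.Valid) (B : Finset A) (p : A) :
    0 ≤ v.margUtil B p := by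
  unfold VoterPref.margUtil VoterPref.util
  rw [← Finset.sum_sub_distrib]
  refine Finset.sum_nonneg fun g hg => ?_
  rw [sub_nonneg]
  refine Finset.sum_le_sum_of_subset_of_nonneg ?_ fun j _ _ => hv.2.2.1 g hg j
  exact Finset.Icc_subset_Icc_right
    (Finset.card_le_card (Finset.inter_subset_inter (subset_refl g) (Finset.subset_insert p B)))

lemma aux_margUtil_eq_zero (v : VoterPref A) {p : A} (hp : p ∉ v.desired) (B : Finset A) :
    v.margUtil B p = 0 := by
  unfold VoterPref.margUtil VoterPref.util
  rw [sub_eq_zero]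
  refine Finset.sum_congr rfl fun g hg => ?_
  have hpg : p ∉ g := fun hpg => hp (Finset.mem_sup.mpr ⟨g, hg, hpg⟩)
  rw [Finset.inter_insert_of_notMem hpg]

lemma aux_margUtil_of_mem (v : VoterPref A) (hv : v.Valid) {p : A} {g : Finset A}
    (hg : g ∈ v.parts) (hpg : p ∈ g) {B : Finset A} (hpB : p ∉ B) :
    v.margUtil B p = v.margU g ((g ∩ B).card + 1) := by
  unfold VoterPref.margUtil VoterPref.util
  rw [← Finset.sum_sub_distrib]
  rw [Finset.sum_eq_single g]
  · have h1 : g ∩ insert p B = insert p (g ∩ B) := Finset.inter_insert_of_mem hpg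
    have h2 : p ∉ g ∩ B := fun h => hpB (Finset.mem_inter.mp h).2
    rw [h1, Finset.card_insert_of_notMem h2,
      Finset.sum_Icc_succ_top (Nat.one_le_iff_ne_zero.mpr (Nat.succ_ne_zero _))]
    ring
  · intro g' hg' hne
    have hdisj := hv.2.1 g' hg' g hg hne
    have hpg' : p ∉ g' := fun h => (Finset.disjoint_left.mp hdisj h) hpg
    rw [Finset.inter_insert_of_notMem hpg', sub_self]
  · intro h; exact absurd hg h

lemma aux_choice_mem_afford [LinearOrder A] {E : PB V A} {U : V → A → ℝ} {b : V → ℝ}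
    {B : Finset A} {p : A} (h : choice E U b B = some p) : p ∈ affordSet E U b B := by
  unfold choice at h
  split_ifs at h with hne
  simp only [Option.some.injEq] at h
  subst h
  exact (Finset.mem_filter.mp (Finset.min'_mem _ _)).1

lemma aux_choice_none [LinearOrder A] {E : PB V A} {U : V → A → ℝ} {b : V → ℝ}
    {B : Finset A} (h : choice E U b B = none) : ¬ (affordSet E U b B).Nonempty := by
  intro hne
  unfold choice at h
  rw [dif_pos hne] at h
  cases h

lemma aux_qmin_nonneg {E : PB V A} {U : V → A → ℝ} {b : V → ℝ} {p : A}
    (h : ∃ q, Affordable E U b p q) : 0 ≤ qmin E U b p :=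
  le_csInf h fun q hq => hq.1

lemma aux_sum_min_qmin_le_one {E : PB V A} {U : V → A → ℝ} {b : V → ℝ} {p : A}
    (hb : ∀ i, 0 ≤ b i) (hU : ∀ i, 0 ≤ U i p) (hc : E.cost p = 1)
    (hne : ∃ q, Affordable E U b p q) :
    ∑ i, min (b i) (U i p * qmin E U b p) ≤ 1 := by
  set q0 := qmin E U b p with hq0def
  by_contra hcon
  push_neg at hcon
  set M : ℝ := ∑ i, U i p with hM
  have hM0 : 0 ≤ M := Finset.sum_nonneg fun i _ => hU i
  have hq00 : 0 ≤ q0 := aux_qmin_nonneg hne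
  have hfM : ∑ i, min (b i) (U i p * q0) ≤ M * q0 := by
    rw [hM, Finset.sum_mul]
    exact Finset.sum_le_sum fun i _ => min_le_right _ _
  have h1 : (1:ℝ) < M * q0 := lt_of_lt_of_le hcon hfM
  have hMpos : 0 < M := by nlinarith
  have hq0pos : 0 < q0 := by nlinarith
  set ε := (∑ i, min (b i) (U i p * q0)) - 1 with hε
  have hεpos : 0 < ε := by simp only [hε]; linarith
  have hεM : ε / M < q0 := by
    rw [div_lt_iff₀ hMpos]
    nlinarith
  set q1 := q0 - ε / M with hq1def
  have hq1 : 0 < q1 := by simp only [hq1def]; linarith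
  have key : ∀ i, min (b i) (U i p * q0) ≤ min (b i) (U i p * q1) + U i p * (ε / M) := by
    intro i
    have heq : U i p * q0 = U i p * q1 + U i p * (ε / M) := by
      simp only [hq1def]; ring
    have hd : 0 ≤ U i p * (ε / M) :=
      mul_nonneg (hU i) (le_of_lt (div_pos hεpos hMpos))
    rw [heq]
    rcases le_total (b i) (U i p * q1) with h | h
    · have h2 := min_le_left (b i) (U i p * q1 + U i p * (ε / M))
      rw [min_eq_left h]
      linarith
    · rw [min_eq_right h]
      have h2 := min_le_right (b i) (U i p * q1 + U i p * (ε / M))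
      linarith
  have hsum : ∑ i, min (b i) (U i p * q0) ≤ (∑ i, min (b i) (U i p * q1)) + ε := by
    calc ∑ i, min (b i) (U i p * q0)
        ≤ ∑ i, (min (b i) (U i p * q1) + U i p * (ε / M)) :=
          Finset.sum_le_sum fun i _ => key i
      _ = (∑ i, min (b i) (U i p * q1)) + M * (ε / M) := by
          rw [Finset.sum_add_distrib, ← Finset.sum_mul]
      _ = (∑ i, min (b i) (U i p * q1)) + ε := by
          rw [mul_comm, div_mul_cancel₀ _ (ne_of_gt hMpos)]
  have haff : Affordable E U b p q1 := by
    refine ⟨hq1.le, ?_⟩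
    rw [hc]
    have : (1:ℝ) ≤ ∑ i, min (b i) (U i p * q1) := by linarith [hsum, hεpos]
    linarith
  have hle : q0 ≤ q1 := csInf_le ⟨0, fun q hq => hq.1⟩ haff
  have : q1 < q0 := by simp only [hq1def]; linarith [div_pos hεpos hMpos]
  linarith

lemma aux_state_succ_some [LinearOrder A] (E : PB V A) (Ufun : Finset A → V → A → ℝ)
    {t : ℕ} {p : A}
    (h : choice E (Ufun (state E Ufun t).1) (state E Ufun t).2 (state E Ufun t).1 = some p) :
    state E Ufun (t+1) =
      (insert p (state E Ufun t).1,
       fun i => (state E Ufun t).2 i -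
         min ((state E Ufun t).2 i)
           (Ufun (state E Ufun t).1 i p *
             qmin E (Ufun (state E Ufun t).1) (state E Ufun t).2 p)) := by
  simp only [state]
  rw [h]

lemma aux_state_succ_none [LinearOrder A] (E : PB V A) (Ufun : Finset A → V → A → ℝ)
    {t : ℕ}
    (h : choice E (Ufun (state E Ufun t).1) (state E Ufun t).2 (state E Ufun t).1 = none) :
    state E Ufun (t+1) = state E Ufun t := by
  simp only [state]
  rw [h]

lemma aux_afford_card [LinearOrder A] (E : PB V A) (Ufun : Finset A → V → A → ℝ) :
    ∀ t : ℕ,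
      (affordSet E (Ufun (state E Ufun t).1) (state E Ufun t).2 (state E Ufun t).1).Nonempty →
      t ≤ (state E Ufun t).1.card := by
  intro t
  induction t with
  | zero => intro _; exact Nat.zero_le _
  | succ t ih =>
    intro hne'
    rcases h : choice E (Ufun (state E Ufun t).1) (state E Ufun t).2 (state E Ufun t).1
      with _ | p
    · exfalso
      rw [aux_state_succ_none E Ufun h] at hne'
      exact aux_choice_none h hne'
    · have hmem := aux_choice_mem_afford h
      have hpB : p ∉ (state E Ufun t).1 := (Finset.mem_filter.mp hmem).2.1
      have hst := aux_state_succ_some E Ufun h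
      rw [hst]
      simp only [Finset.card_insert_of_notMem hpB]
      exact Nat.succ_le_succ (ih ⟨p, hmem⟩)

lemma aux_afford_final [LinearOrder A] (E : PB V A) (Ufun : Finset A → V → A → ℝ) :
    ¬ (affordSet E (Ufun (state E Ufun (Fintype.card A)).1)
        (state E Ufun (Fintype.card A)).2 (state E Ufun (Fintype.card A)).1).Nonempty := by
  intro hne
  have h := aux_afford_card E Ufun (Fintype.card A) hne
  have hle : (state E Ufun (Fintype.card A)).1.card ≤ Fintype.card A := by
    simpa using Finset.card_le_univ (state E Ufun (Fintype.card A)).1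
  have hcard : (state E Ufun (Fintype.card A)).1 = Finset.univ :=
    Finset.eq_univ_of_card _ (le_antisymm hle h)
  obtain ⟨p, hp⟩ := hne
  have hpB := (Finset.mem_filter.mp hp).2.1
  rw [hcard] at hpB
  exact hpB (Finset.mem_univ p)

end AuxLemmas

/-- Under unit costs, if all voters' marginal utilities are strictly positive,
then SRX satisfies Strong-BPJR with substitutes: for every group `S` that is
`T`-cohesive with substitutes, the SRX output `B` satisfies
`|(∪_{i∈S} A(i)) ∩ B| ≥ |T|`. -/
theorem srx_StrongBPJR_under_unit_cost
    {V A : Type*} [Fintype V] [Fintype A] [DecidableEq A] [LinearOrder A]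
    (E : PB V A) (I : ℝ)
    (hV : 0 < Fintype.card V)
    (hbudget : 0 < E.budget)
    (hunit : ∀ p : A, E.cost p = 1)
    (hvalid : ∀ i : V, (E.pref i).Valid)
    (hI : 0 < I)
    (hfirst : ∀ i : V, ∀ g ∈ (E.pref i).parts, (E.pref i).margU g 1 = I)
    (hpos : ∀ i : V, ∀ g ∈ (E.pref i).parts, ∀ k : ℕ, 0 < (E.pref i).margU g k)
    (S : Finset V) (T : Finset A)
    (hco : TCohesiveSub E S T) :
    T.card ≤ ((S.biUnion fun i => (E.pref i).desired) ∩ SRX E).card := by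
  classical
  set D := S.biUnion fun i => (E.pref i).desired with hD
  set n : ℝ := (Fintype.card V : ℝ) with hn
  have hn0 : 0 < n := by rw [hn]; exact_mod_cast hV
  have hshare : 0 < E.budget / n := div_pos hbudget hn0
  -- Main invariant: voters' budgets stay nonnegative, and the group `S`
  -- keeps at least its share of budget minus what was spent on `D`-projects.
  have key : ∀ t : ℕ,
      (∀ i : V, 0 ≤ (state E (srxU E) t).2 i) ∧
      (S.card : ℝ) * (E.budget / n) - ((D ∩ (state E (srxU E) t).1).card : ℝ) ≤
        ∑ i ∈ S, (state E (srxU E) t).2 i := by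
    intro t
    induction t with
    | zero =>
      constructor
      · intro i
        simp only [state]
        exact hshare.le
      · simp only [state, Finset.inter_empty, Finset.card_empty, Nat.cast_zero, sub_zero,
          Finset.sum_const, nsmul_eq_mul]
        rw [hn]
    | succ t ih =>
      obtain ⟨ih0, ih1⟩ := ih
      rcases h : choice E (srxU E (state E (srxU E) t).1) (state E (srxU E) t).2
          (state E (srxU E) t).1 with _ | p
      · rw [aux_state_succ_none E (srxU E) h]
        exact ⟨ih0, ih1⟩
      · have hst := aux_state_succ_some E (srxU E) h
        set B := (state E (srxU E) t).1 with hB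
        set b := (state E (srxU E) t).2 with hb
        have hmem := aux_choice_mem_afford h
        have hpB : p ∉ B := (Finset.mem_filter.mp hmem).2.1
        have hex : ∃ q, Affordable E (srxU E B) b p q := (Finset.mem_filter.mp hmem).2.2
        set q := qmin E (srxU E B) b p with hq
        have hq0 : 0 ≤ q := aux_qmin_nonneg hex
        have hUnn : ∀ i, 0 ≤ srxU E B i p := fun i =>
          aux_margUtil_nonneg (E.pref i) (hvalid i) B p
        have hpay0 : ∀ i, 0 ≤ min (b i) (srxU E B i p * q) := fun i =>
          le_min (ih0 i) (mul_nonneg (hUnn i) hq0)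
        constructor
        · intro i
          rw [hst]
          simp only
          have := min_le_left (b i) (srxU E B i p * q)
          linarith
        · rw [hst]
          simp only
          rw [Finset.sum_sub_distrib]
          by_cases hpD : p ∈ D
          · have hcard : (D ∩ insert p B).card = (D ∩ B).card + 1 := by
              rw [Finset.inter_insert_of_mem hpD,
                Finset.card_insert_of_notMem (fun hx => hpB (Finset.mem_inter.mp hx).2)]
            have hpay1 : ∑ i ∈ S, min (b i) (srxU E B i p * q) ≤ 1 := by
              calc ∑ i ∈ S, min (b i) (srxU E B i p * q)
                  ≤ ∑ i, min (b i) (srxU E B i p * q) :=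
                    Finset.sum_le_sum_of_subset_of_nonneg (Finset.subset_univ S)
                      (fun i _ _ => hpay0 i)
                _ ≤ 1 := aux_sum_min_qmin_le_one ih0 hUnn (hunit p) hex
            rw [hcard]
            push_cast
            linarith
          · have hcard : D ∩ insert p B = D ∩ B := Finset.inter_insert_of_notMem hpD
            have hpay : ∀ i ∈ S, min (b i) (srxU E B i p * q) = 0 := by
              intro i hi
              have hdes : p ∉ (E.pref i).desired := fun hdes =>
                hpD (Finset.mem_biUnion.mpr ⟨i, hi, hdes⟩)
              have : srxU E B i p = 0 := aux_margUtil_eq_zero (E.pref i) hdes B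
              rw [this, zero_mul, min_eq_right (ih0 i)]
            rw [hcard, Finset.sum_congr rfl hpay]
            simp only [Finset.sum_const, smul_zero, sub_zero]
            exact ih1
  -- Final state
  set Bf := (state E (srxU E) (Fintype.card A)).1 with hBf
  set bf := (state E (srxU E) (Fintype.card A)).2 with hbf
  have hSRX : SRX E = Bf := rfl
  rw [hSRX]
  rcases T.eq_empty_or_nonempty with hT | hT
  · simp [hT]
  by_contra hlt
  push_neg at hlt
  have hlt' : ((D ∩ Bf).card : ℝ) + 1 ≤ (T.card : ℝ) := by exact_mod_cast hlt
  -- |T| ≤ |S| * (L/n)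
  have hTS : (T.card : ℝ) ≤ (E.budget / n) * S.card := by
    have := hco.1
    simpa [hunit] using this
  have hS : S.Nonempty := by
    rcases S.eq_empty_or_nonempty with hS | hS
    · exfalso
      rw [hS] at hTS
      have : (1:ℝ) ≤ (T.card : ℝ) := by exact_mod_cast hT.card_pos
      simp at hTS
      exact hT.ne_empty hTS
    · exact hS
  obtain ⟨i₀, hi₀⟩ := hS
  -- the group S still holds at least 1 unit of money
  have hsum1 : (1:ℝ) ≤ ∑ i ∈ S, bf i := by
    have h2 := (key (Fintype.card A)).2
    rw [← hBf, ← hbf] at h2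
    have : (S.card : ℝ) * (E.budget / n) = (E.budget / n) * S.card := by ring
    linarith
  -- some project of T is unselected
  have hTD : T ⊆ D := fun p hp =>
    Finset.mem_biUnion.mpr ⟨i₀, hi₀, hco.2.1 i₀ hi₀ hp⟩
  have hTB : ¬ T ⊆ Bf := by
    intro hsub
    have : T ⊆ D ∩ Bf := Finset.subset_inter hTD hsub
    have := Finset.card_le_card this
    have : (T.card : ℝ) ≤ ((D ∩ Bf).card : ℝ) := by exact_mod_cast this
    linarith
  obtain ⟨p, hpT, hpBf⟩ := Finset.not_subset.mp hTB
  -- every voter of S has positive marginal utility for p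
  have hbf0 : ∀ i, 0 ≤ bf i := (key (Fintype.card A)).1
  have hUpos : ∀ i ∈ S, 0 < srxU E Bf i p := by
    intro i hi
    have hdes : p ∈ (E.pref i).desired := hco.2.1 i hi hpT
    obtain ⟨g, hg, hpg⟩ := Finset.mem_sup.mp hdes
    have := aux_margUtil_of_mem (E.pref i) (hvalid i) hg hpg hpBf
    rw [show srxU E Bf i p = (E.pref i).margUtil Bf p from rfl, this]
    exact hpos i g hg _
  have hUnn : ∀ i, 0 ≤ srxU E Bf i p := fun i =>
    aux_margUtil_nonneg (E.pref i) (hvalid i) Bf p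
  -- p is affordable at the final state: contradiction
  obtain ⟨i₁, hi₁⟩ : S.Nonempty := ⟨i₀, hi₀⟩
  set qbig := S.sup' ⟨i₁, hi₁⟩ (fun i => bf i / srxU E Bf i p) with hqbig
  have hqbig0 : 0 ≤ qbig := le_trans
    (div_nonneg (hbf0 i₁) (hUnn i₁))
    (Finset.le_sup' (fun i => bf i / srxU E Bf i p) hi₁)
  have hminb : ∀ i ∈ S, min (bf i) (srxU E Bf i p * qbig) = bf i := by
    intro i hi
    have h1 : bf i / srxU E Bf i p ≤ qbig :=
      Finset.le_sup' (fun j => bf j / srxU E Bf j p) hi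
    have h2 : bf i ≤ srxU E Bf i p * qbig := by
      rw [← div_le_iff₀' (hUpos i hi)]
      exact h1
    exact min_eq_left h2
  have haff : Affordable E (srxU E Bf) bf p qbig := by
    refine ⟨hqbig0, ?_⟩
    rw [hunit p]
    calc (1:ℝ) ≤ ∑ i ∈ S, bf i := hsum1
      _ = ∑ i ∈ S, min (bf i) (srxU E Bf i p * qbig) :=
          (Finset.sum_congr rfl hminb).symm
      _ ≤ ∑ i, min (bf i) (srxU E Bf i p * qbig) :=
          Finset.sum_le_sum_of_subset_of_nonneg (Finset.subset_univ S)
            (fun i _ _ => le_min (hbf0 i) (mul_nonneg (hUnn i) hqbig0))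
  have hmem : p ∈ affordSet E (srxU E Bf) bf Bf :=
    Finset.mem_filter.mpr ⟨Finset.mem_univ p, hpBf, ⟨qbig, haff⟩⟩
  exact aux_afford_final E (srxU E) ⟨p, hmem⟩
end

section
/- Under global substitutes, let S⊆V be a group that is T-cohesive with substitutes for T⊆A, consider an SRX execution, and for each step t let B_t be the projects selected so far and T_t = {a∈T : g(a) ∩ B_t = ∅}. Let P(k) denote the total cost of the k cheapest projects in T. As long as T_t ≠ ∅ and |A(i) ∩ B_t| < |T| for every i∈S, each voter i∈S has spent at most P(|A(i) ∩ B_t|)/|S| of their initial budget L/n in total over all steps up to t. -/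
open Finset

/-- `T_t`-style set: the projects of `T` such that neither the project nor any
of its substitutes (w.r.t. the common partition `P`) belongs to `B`. -/
def Tleft {A : Type*} [DecidableEq A] (P : Finset (Finset A)) (T B : Finset A) :
    Finset A :=
  T.filter fun a => ∀ g ∈ P, a ∈ g → ∀ b ∈ g, b ∉ B

/-- `P(k)`: the total cost of the `k` cheapest projects of `T`. -/
noncomputable def cheapestSum {A : Type*} (cost : A → ℝ) (T : Finset A) (k : ℕ) : ℝ :=
  (((T.val.map cost).sort (· ≤ ·)).take k).sum

open scoped Classical in
lemma choice_spec {V A : Type*} [Fintype V] [Fintype A] [DecidableEq A] [LinearOrder A]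
    (E : PB V A) (U : V → A → ℝ) (b : V → ℝ) (B : Finset A) (p : A)
    (h : choice E U b B = some p) :
    p ∉ B ∧ (∃ q, Affordable E U b p q) ∧
      ∀ a, a ∉ B → (∃ q, Affordable E U b a q) → qmin E U b p ≤ qmin E U b a := by
  unfold choice at h
  split at h
  case isFalse => exact absurd h (by simp)
  case isTrue hne =>
    rw [Option.some.injEq] at h
    have hmem := Finset.min'_mem ((affordSet E U b B).filter fun p =>
        qmin E U b p = (affordSet E U b B).inf' hne (qmin E U b)) (by
      obtain ⟨p, hp, hq⟩ := Finset.exists_mem_eq_inf' hne (qmin E U b)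
      exact ⟨p, Finset.mem_filter.mpr ⟨hp, hq.symm⟩⟩)
    rw [h] at hmem
    rw [Finset.mem_filter] at hmem
    obtain ⟨hpaff, hpq⟩ := hmem
    rw [affordSet, Finset.mem_filter] at hpaff
    refine ⟨hpaff.2.1, hpaff.2.2, fun a haB haq => ?_⟩
    rw [hpq]
    exact Finset.inf'_le _ (by rw [affordSet, Finset.mem_filter]; exact ⟨Finset.mem_univ _, haB, haq⟩)

lemma qmin_nonneg {V A : Type*} [Fintype V] [Fintype A] [DecidableEq A]
    (E : PB V A) (U : V → A → ℝ) (b : V → ℝ) (p : A) : 0 ≤ qmin E U b p :=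
  Real.sInf_nonneg (fun _ hq => hq.1)

lemma qmin_le {V A : Type*} [Fintype V] [Fintype A] [DecidableEq A]
    (E : PB V A) (U : V → A → ℝ) (b : V → ℝ) (p : A) (q : ℝ)
    (hq : Affordable E U b p q) : qmin E U b p ≤ q :=
  csInf_le ⟨0, fun _ hr => hr.1⟩ hq

lemma state_succ_none {V A : Type*} [Fintype V] [Fintype A] [DecidableEq A] [LinearOrder A]
    (E : PB V A) (Ufun : Finset A → V → A → ℝ) (t : ℕ)
    (h : choice E (Ufun (state E Ufun t).1) (state E Ufun t).2 (state E Ufun t).1 = none) :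
    state E Ufun (t+1) = state E Ufun t := by
  simp [state, h]

lemma state_succ_some {V A : Type*} [Fintype V] [Fintype A] [DecidableEq A] [LinearOrder A]
    (E : PB V A) (Ufun : Finset A → V → A → ℝ) (t : ℕ) (p : A)
    (h : choice E (Ufun (state E Ufun t).1) (state E Ufun t).2 (state E Ufun t).1 = some p) :
    state E Ufun (t+1) = (insert p (state E Ufun t).1,
      fun i => (state E Ufun t).2 i - min ((state E Ufun t).2 i)
        (Ufun (state E Ufun t).1 i p *
          qmin E (Ufun (state E Ufun t).1) (state E Ufun t).2 p)) := by
  simp [state, h]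

lemma state_snd_nonneg {V A : Type*} [Fintype V] [Fintype A] [DecidableEq A] [LinearOrder A]
    (E : PB V A) (Ufun : Finset A → V → A → ℝ)
    (h0 : 0 ≤ E.budget / (Fintype.card V : ℝ)) :
    ∀ t i, 0 ≤ (state E Ufun t).2 i := by
  intro t
  induction t with
  | zero => intro i; exact h0
  | succ t ih =>
    intro i
    cases h : choice E (Ufun (state E Ufun t).1) (state E Ufun t).2 (state E Ufun t).1 with
    | none => rw [state_succ_none E Ufun t h]; exact ih i
    | some p =>
      rw [state_succ_some E Ufun t p h]
      simp only
      have := min_le_left ((state E Ufun t).2 i)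
        (Ufun (state E Ufun t).1 i p * qmin E (Ufun (state E Ufun t).1) (state E Ufun t).2 p)
      linarith

lemma state_fst_mono {V A : Type*} [Fintype V] [Fintype A] [DecidableEq A] [LinearOrder A]
    (E : PB V A) (Ufun : Finset A → V → A → ℝ) {s t : ℕ} (hst : s ≤ t) :
    (state E Ufun s).1 ⊆ (state E Ufun t).1 := by
  induction t with
  | zero => rw [Nat.le_zero.mp hst]
  | succ t ih =>
    rcases Nat.lt_or_ge s (t+1) with h | h
    · have hsub := ih (Nat.lt_succ_iff.mp h)
      cases hc : choice E (Ufun (state E Ufun t).1) (state E Ufun t).2 (state E Ufun t).1 with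
      | none => rw [state_succ_none E Ufun t hc]; exact hsub
      | some p =>
        rw [state_succ_some E Ufun t p hc]
        exact hsub.trans (Finset.subset_insert _ _)
    · rw [Nat.le_antisymm hst h]

namespace VoterPref

variable {A : Type*} [DecidableEq A]

lemma mem_desired_iff (v : VoterPref A) (p : A) :
    p ∈ v.desired ↔ ∃ g ∈ v.parts, p ∈ g := by
  simp [VoterPref.desired, Finset.mem_sup]

lemma margUtil_eq_of_mem (v : VoterPref A) (hv : v.Valid) {B : Finset A} {p : A} {g : Finset A}
    (hg : g ∈ v.parts) (hpg : p ∈ g) (hpB : p ∉ B) :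
    v.margUtil B p = v.margU g ((g ∩ B).card + 1) := by
  unfold VoterPref.margUtil VoterPref.util
  rw [← Finset.sum_sub_distrib]
  rw [Finset.sum_eq_single g]
  · have h1 : g ∩ insert p B = insert p (g ∩ B) := by
      ext x; simp [Finset.mem_inter, Finset.mem_insert]
      constructor
      · rintro ⟨hx, hx2 | hx2⟩
        · left; exact hx2
        · right; exact ⟨hx, hx2⟩
      · rintro (rfl | ⟨hx, hx2⟩)
        · exact ⟨hpg, Or.inl rfl⟩
        · exact ⟨hx, Or.inr hx2⟩
    have h2 : (g ∩ insert p B).card = (g ∩ B).card + 1 := by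
      rw [h1, Finset.card_insert_of_notMem (fun hx => hpB (Finset.mem_inter.mp hx).2)]
    rw [h2, Finset.sum_Icc_succ_top (Nat.one_le_iff_ne_zero.mpr (Nat.succ_ne_zero _))]
    ring
  · intro g' hg' hne
    have hpg' : p ∉ g' := fun hp =>
      Finset.disjoint_left.mp (hv.2.1 g' hg' g hg hne) hp hpg
    have : g' ∩ insert p B = g' ∩ B := by
      ext x; simp [Finset.mem_inter, Finset.mem_insert]
      intro hx
      rintro rfl
      exact absurd hx hpg'
    rw [this]; ring
  · intro h; exact absurd hg h

lemma margUtil_eq_zero_of_not_desired (v : VoterPref A) {B : Finset A} {p : A}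
    (hpd : p ∉ v.desired) : v.margUtil B p = 0 := by
  unfold VoterPref.margUtil VoterPref.util
  rw [← Finset.sum_sub_distrib]
  apply Finset.sum_eq_zero
  intro g hg
  have hpg : p ∉ g := fun hp => hpd ((mem_desired_iff v p).mpr ⟨g, hg, hp⟩)
  have : g ∩ insert p B = g ∩ B := by
    ext x; simp [Finset.mem_inter, Finset.mem_insert]
    intro hx
    rintro rfl
    exact absurd hx hpg
  rw [this]; ring

lemma margUtil_eq_zero_of_mem (v : VoterPref A) {B : Finset A} {p : A}
    (hpB : p ∈ B) : v.margUtil B p = 0 := by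
  unfold VoterPref.margUtil
  rw [Finset.insert_eq_self.mpr hpB]; ring

lemma margU_le_first (v : VoterPref A) (hv : v.Valid) {g : Finset A} (hg : g ∈ v.parts) :
    ∀ j : ℕ, v.margU g (j + 1) ≤ v.margU g 1 := by
  intro j
  induction j with
  | zero => exact le_refl _
  | succ j ih => exact (hv.2.2.2 g hg (j+1)).trans ih

lemma margUtil_nonneg (v : VoterPref A) (hv : v.Valid) (B : Finset A) (p : A) :
    0 ≤ v.margUtil B p := by
  by_cases hpB : p ∈ B
  · rw [margUtil_eq_zero_of_mem v hpB]
  by_cases hpd : p ∈ v.desired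
  · obtain ⟨g, hg, hpg⟩ := (mem_desired_iff v p).mp hpd
    rw [margUtil_eq_of_mem v hv hg hpg hpB]
    exact hv.2.2.1 g hg _
  · rw [margUtil_eq_zero_of_not_desired v hpd]

lemma margUtil_le_I (v : VoterPref A) (hv : v.Valid) {I : ℝ} (hI : 0 ≤ I)
    (hfirst : ∀ g ∈ v.parts, v.margU g 1 = I) (B : Finset A) (p : A) :
    v.margUtil B p ≤ I := by
  by_cases hpB : p ∈ B
  · rw [margUtil_eq_zero_of_mem v hpB]; exact hI
  by_cases hpd : p ∈ v.desired
  · obtain ⟨g, hg, hpg⟩ := (mem_desired_iff v p).mp hpd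
    rw [margUtil_eq_of_mem v hv hg hpg hpB]
    rw [← hfirst g hg]
    exact margU_le_first v hv hg _
  · rw [margUtil_eq_zero_of_not_desired v hpd]; exact hI

lemma margUtil_eq_I_of_untouched (v : VoterPref A) (hv : v.Valid) {I : ℝ}
    (hfirst : ∀ g ∈ v.parts, v.margU g 1 = I) {B : Finset A} {p : A} {g : Finset A}
    (hg : g ∈ v.parts) (hpg : p ∈ g) (hpB : p ∉ B) (hempty : g ∩ B = ∅) :
    v.margUtil B p = I := by
  rw [margUtil_eq_of_mem v hv hg hpg hpB, hempty]
  simpa using hfirst g hg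

end VoterPref

section CheapLemmas
variable {A : Type*} [DecidableEq A] (cost : A → ℝ) (T : Finset A)

lemma length_sortedCosts : ((T.val.map cost).sort (· ≤ ·)).length = T.card := by
  rw [Multiset.length_sort, Multiset.card_map]; rfl

lemma mem_sortedCosts {x : ℝ} :
    x ∈ ((T.val.map cost).sort (· ≤ ·)) ↔ ∃ a ∈ T, cost a = x := by
  rw [← Multiset.mem_coe, Multiset.sort_eq, Multiset.mem_map]
  rfl

lemma cheapestSum_zero : cheapestSum cost T 0 = 0 := rfl

lemma cheapestSum_succ {k : ℕ} (hk : k < T.card) :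
    cheapestSum cost T (k+1) = cheapestSum cost T k +
      ((T.val.map cost).sort (· ≤ ·)).get ⟨k, by rw [length_sortedCosts]; exact hk⟩ := by
  unfold cheapestSum
  exact List.sum_take_succ _ _ _

lemma cheapestSum_mono (hpos : ∀ a ∈ T, 0 ≤ cost a) : Monotone (cheapestSum cost T) := by
  apply monotone_nat_of_le_succ
  intro k
  rcases Nat.lt_or_ge k T.card with hk | hk
  · rw [cheapestSum_succ cost T hk]
    have hmem : ((T.val.map cost).sort (· ≤ ·)).get ⟨k, by rw [length_sortedCosts]; exact hk⟩
        ∈ ((T.val.map cost).sort (· ≤ ·)) := List.get_mem _ _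
    obtain ⟨a, ha, hax⟩ := (mem_sortedCosts cost T).mp hmem
    have := hpos a ha
    rw [hax] at this
    linarith
  · unfold cheapestSum
    rw [List.take_of_length_le (by rw [length_sortedCosts]; exact hk),
        List.take_of_length_le (by rw [length_sortedCosts]; omega)]

lemma cheapestSum_card : cheapestSum cost T T.card = ∑ p ∈ T, cost p := by
  unfold cheapestSum
  rw [List.take_of_length_le (le_of_eq (length_sortedCosts cost T))]
  rw [← Multiset.sum_coe, Multiset.sort_eq]
  rfl

lemma sorted_get_le {j k : ℕ} (hj : j < T.card) (hk : k < T.card) (hjk : j ≤ k) :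
    ((T.val.map cost).sort (· ≤ ·)).get ⟨j, by rw [length_sortedCosts]; exact hj⟩ ≤
    ((T.val.map cost).sort (· ≤ ·)).get ⟨k, by rw [length_sortedCosts]; exact hk⟩ :=
  (Multiset.pairwise_sort _ _).rel_get_of_le (Fin.le_def.mpr hjk)

lemma cost_le_sorted_last {a : A} (ha : a ∈ T) (h0 : 0 < T.card) :
    cost a ≤ ((T.val.map cost).sort (· ≤ ·)).get
      ⟨T.card - 1, by rw [length_sortedCosts]; omega⟩ := by
  have hx : cost a ∈ ((T.val.map cost).sort (· ≤ ·)) :=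
    (mem_sortedCosts cost T).mpr ⟨a, ha, rfl⟩
  obtain ⟨j, hj⟩ := List.mem_iff_get.mp hx
  rw [← hj]
  apply (Multiset.pairwise_sort _ _).rel_get_of_le
  apply Fin.le_def.mpr
  have hlen := length_sortedCosts cost T
  have h2 : (j : ℕ) < T.card := hlen ▸ j.isLt
  show (j : ℕ) ≤ T.card - 1
  omega

open scoped Classical in
lemma exists_cheap {k : ℕ} (hk : k < T.card) {U : Finset A} (hU : U ⊆ T)
    (hcard : (T \ U).card ≤ k) :
    ∃ a ∈ U, cost a ≤ ((T.val.map cost).sort (· ≤ ·)).get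
      ⟨k, by rw [length_sortedCosts]; exact hk⟩ := by
  set l := ((T.val.map cost).sort (· ≤ ·)) with hl
  set v := l.get ⟨k, by rw [length_sortedCosts]; exact hk⟩ with hv
  by_contra hcon
  push_neg at hcon
  have hC : (T.filter fun a => cost a ≤ v) ⊆ T \ U := by
    intro a haf
    rw [Finset.mem_filter] at haf
    rw [Finset.mem_sdiff]
    exact ⟨haf.1, fun haU => absurd (hcon a haU) (not_lt.mpr haf.2)⟩
  have hcount : k + 1 ≤ (T.filter fun a => cost a ≤ v).card := by
    have h12 : (T.filter fun a => cost a ≤ v).card =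
        Multiset.countP (fun x => x ≤ v) (T.val.map cost) := by
      rw [Multiset.countP_map]
      show Multiset.card (Multiset.filter _ T.val) = Multiset.card (Multiset.filter _ T.val)
      apply congrArg
      exact Multiset.filter_congr (fun x _ => Iff.rfl)
    have h3 : Multiset.countP (fun x => x ≤ v) (T.val.map cost) =
        l.countP (fun x => decide (x ≤ v)) := by
      rw [← Multiset.sort_eq (T.val.map cost) ((· ≤ ·) : ℝ → ℝ → Prop), ← hl, Multiset.coe_countP]
    rw [h12, h3]
    -- count on sorted list
    have hklen : k < l.length := by rw [hl, length_sortedCosts]; exact hk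
    have hsorted : l.Pairwise (· ≤ ·) := Multiset.pairwise_sort _ _
    have h4 : (l.take (k+1)).countP (fun x => decide (x ≤ v)) = (l.take (k+1)).length := by
      apply List.countP_eq_length.mpr
      intro a ha
      obtain ⟨j, hj, hja⟩ := List.mem_take_iff_getElem.mp ha
      have hjlen : j < l.length := by simp at hj; omega
      have hgj : l.get ⟨j, hjlen⟩ = a := by
        rw [← hja]; simp [List.get_eq_getElem, List.getElem_take]
      rw [decide_eq_true_eq, ← hgj, hv]
      exact hsorted.rel_get_of_le (Fin.le_def.mpr (by simp at hj ⊢; omega))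
    have h5 : l.countP (fun x => decide (x ≤ v)) =
        (l.take (k+1)).countP (fun x => decide (x ≤ v)) +
        (l.drop (k+1)).countP (fun x => decide (x ≤ v)) := by
      rw [← List.countP_append, List.take_append_drop]
    have h6 : (l.take (k+1)).length = k+1 := by rw [List.length_take]; omega
    omega
  have := (Finset.card_le_card hC).trans hcard
  omega

end CheapLemmas

section TleftLemmas
variable {V A : Type*} [Fintype V] [Fintype A] [DecidableEq A]

lemma mem_Tleft {P : Finset (Finset A)} {T B : Finset A} {a : A} :
    a ∈ Tleft P T B ↔ a ∈ T ∧ ∀ g ∈ P, a ∈ g → ∀ b ∈ g, b ∉ B := by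
  simp only [Tleft, Finset.mem_filter]

lemma Tleft_subset (P : Finset (Finset A)) (T B : Finset A) : Tleft P T B ⊆ T :=
  fun _ ha => (mem_Tleft.mp ha).1

lemma Tleft_anti (P : Finset (Finset A)) (T : Finset A) {B B' : Finset A} (h : B ⊆ B') :
    Tleft P T B' ⊆ Tleft P T B := by
  intro a ha
  rw [mem_Tleft] at ha ⊢
  exact ⟨ha.1, fun g hg hag b hbg hbB => ha.2 g hg hag b hbg (h hbB)⟩

lemma Tleft_not_mem (P : Finset (Finset A)) (hcover : P.sup id = Finset.univ)
    {T B : Finset A} {a : A} (ha : a ∈ Tleft P T B) : a ∉ B := by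
  rw [mem_Tleft] at ha
  have : a ∈ P.sup id := hcover ▸ Finset.mem_univ a
  rw [Finset.mem_sup] at this
  obtain ⟨g, hg, hag⟩ := this
  exact ha.2 g hg hag a hag

open scoped Classical in
lemma card_sdiff_Tleft (E : PB V A) (P : Finset (Finset A))
    (hglobal : GlobalSubs E P) (T B : Finset A) (i : V)
    (hvalid : (E.pref i).Valid)
    (hdes : T ⊆ (E.pref i).desired)
    (hsep : ∀ p₁ ∈ T, ∀ p₂ ∈ T, p₁ ≠ p₂ → ¬ (E.pref i).sameGroup p₁ p₂) :
    (T \ Tleft P T B).card ≤ ((E.pref i).desired ∩ B).card := by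
  obtain ⟨hne, hdisj, hcover, hparts⟩ := hglobal
  have key : ∀ a ∈ T \ Tleft P T B, ∃ b, b ∈ (E.pref i).desired ∩ B ∧
      ∃ g ∈ (E.pref i).parts, a ∈ g ∧ b ∈ g := by
    intro a ha
    rw [Finset.mem_sdiff] at ha
    obtain ⟨haT, haN⟩ := ha
    rw [mem_Tleft] at haN
    push_neg at haN
    obtain ⟨g, hgP, hag, b, hbg, hbB⟩ := haN haT
    obtain ⟨gi, hgi, hagi⟩ := (VoterPref.mem_desired_iff _ a).mp (hdes haT)
    have hgeq : g = gi := by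
      by_contra hne'
      exact Finset.disjoint_left.mp (hdisj g hgP gi (hparts i hgi) hne') hag hagi
    subst hgeq
    refine ⟨b, Finset.mem_inter.mpr ⟨?_, hbB⟩, g, hgi, hag, hbg⟩
    exact (VoterPref.mem_desired_iff _ b).mpr ⟨g, hgi, hbg⟩
  classical
  set f : A → A := fun a => if h : a ∈ T \ Tleft P T B then (key a h).choose else a with hf
  apply Finset.card_le_card_of_injOn f
  · intro a ha
    rw [hf]
    have ha' : a ∈ T \ Tleft P T B := ha
    simp only [dif_pos ha', Finset.mem_coe]
    exact ((key a ha').choose_spec).1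
  · intro a1 h1 a2 h2 heq
    replace h1 : a1 ∈ T \ Tleft P T B := h1
    replace h2 : a2 ∈ T \ Tleft P T B := h2
    simp only [hf, dif_pos h1, dif_pos h2] at heq
    obtain ⟨hb1, g1, hg1, ha1g, hb1g⟩ := (key a1 h1).choose_spec
    obtain ⟨hb2, g2, hg2, ha2g, hb2g⟩ := (key a2 h2).choose_spec
    rw [heq] at hb1g
    have hg12 : g1 = g2 := by
      by_contra hne'
      exact Finset.disjoint_left.mp (hvalid.2.1 g1 hg1 g2 hg2 hne') hb1g hb2g
    subst hg12
    by_contra hane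
    exact hsep a1 (Finset.mem_sdiff.mp h1).1 a2 (Finset.mem_sdiff.mp h2).1 hane
      ⟨g1, hg1, ha1g, ha2g⟩

end TleftLemmas

open scoped Classical in
lemma srx_invariant
    {V A : Type*} [Fintype V] [Fintype A] [DecidableEq A] [LinearOrder A]
    (E : PB V A) (P : Finset (Finset A)) (I : ℝ)
    (hV : 0 < Fintype.card V)
    (hcost : ∀ p : A, 0 < E.cost p)
    (hbudget : 0 < E.budget)
    (hvalid : ∀ i : V, (E.pref i).Valid)
    (hI : 0 < I)
    (hfirst : ∀ i : V, ∀ g ∈ (E.pref i).parts, (E.pref i).margU g 1 = I)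
    (hglobal : GlobalSubs E P)
    (S : Finset V) (T : Finset A)
    (hco : TCohesiveSub E S T)
    (t : ℕ)
    (hTt : (Tleft P T (state E (srxU E) t).1).Nonempty)
    (hlt : ∀ i ∈ S, ((E.pref i).desired ∩ (state E (srxU E) t).1).card < T.card) :
    ∀ t' ≤ t, ∀ i ∈ S,
      E.budget / (Fintype.card V : ℝ) - (state E (srxU E) t').2 i ≤
        cheapestSum E.cost T ((E.pref i).desired ∩ (state E (srxU E) t').1).card /
          (S.card : ℝ) := by
  have h0 : 0 ≤ E.budget / (Fintype.card V : ℝ) :=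
    le_of_lt (div_pos hbudget (by exact_mod_cast hV))
  intro t'
  induction t' with
  | zero =>
    intro _ i _
    show E.budget / (Fintype.card V : ℝ) - E.budget / (Fintype.card V : ℝ) ≤
      cheapestSum E.cost T ((E.pref i).desired ∩ (∅ : Finset A)).card / (S.card : ℝ)
    rw [Finset.inter_empty, Finset.card_empty, cheapestSum_zero]
    simp
  | succ t' ih =>
    intro hle i hi
    have hle' : t' ≤ t := Nat.le_of_succ_le hle
    have hScard : 0 < (S.card : ℝ) := by
      exact_mod_cast Finset.card_pos.mpr ⟨i, hi⟩
    set st := state E (srxU E) t' with hst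
    cases hc : choice E (srxU E st.1) st.2 st.1 with
    | none =>
      rw [state_succ_none E (srxU E) t' hc]
      exact ih hle' i hi
    | some p =>
      rw [state_succ_some E (srxU E) t' p hc]
      simp only
      obtain ⟨hpB, hpaff, hpmin⟩ := choice_spec E (srxU E st.1) st.2 st.1 p hc
      have hbnn : ∀ j, 0 ≤ st.2 j := fun j => state_snd_nonneg E (srxU E) h0 t' j
      have hqnn : 0 ≤ qmin E (srxU E st.1) st.2 p := qmin_nonneg E _ _ _
      by_cases hpd : p ∈ (E.pref i).desired
      · -- p is desired by i : spending can grow by the marginal cheapest cost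
        have hinter : (E.pref i).desired ∩ insert p st.1 = insert p ((E.pref i).desired ∩ st.1) := by
          ext x
          simp only [Finset.mem_inter, Finset.mem_insert]
          constructor
          · rintro ⟨hx, rfl | hx2⟩
            · exact Or.inl rfl
            · exact Or.inr ⟨hx, hx2⟩
          · rintro (rfl | ⟨hx, hx2⟩)
            · exact ⟨hpd, Or.inl rfl⟩
            · exact ⟨hx, Or.inr hx2⟩
        have hpnotin : p ∉ (E.pref i).desired ∩ st.1 :=
          fun hx => hpB (Finset.mem_inter.mp hx).2
        set k := ((E.pref i).desired ∩ st.1).card with hk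
        have hcard1 : ((E.pref i).desired ∩ insert p st.1).card = k + 1 := by
          rw [hinter, Finset.card_insert_of_notMem hpnotin]
        -- k + 1 ≤ count at time t < |T|
        have hsubt : insert p st.1 ⊆ (state E (srxU E) t).1 := by
          have := state_fst_mono E (srxU E) hle
          rwa [state_succ_some E (srxU E) t' p hc] at this
        have hkT : k < T.card := by
          have h1 : ((E.pref i).desired ∩ insert p st.1).card ≤
              ((E.pref i).desired ∩ (state E (srxU E) t).1).card :=
            Finset.card_le_card (Finset.inter_subset_inter_left hsubt)
          have h2 := hlt i hi
          omega
        have hTpos : 0 < T.card := by omega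
        -- find the cheap available project a
        have hsdiff : (T \ Tleft P T st.1).card ≤ k :=
          card_sdiff_Tleft E P hglobal T st.1 i (hvalid i) (hco.2.1 i hi) (hco.2.2 i hi)
        obtain ⟨a, haTl, hacost⟩ :=
          exists_cheap E.cost T hkT (Tleft_subset P T st.1) hsdiff
        have haT : a ∈ T := Tleft_subset P T st.1 haTl
        have haB : a ∉ st.1 := Tleft_not_mem P hglobal.2.2.1 haTl
        set l := ((T.val.map E.cost).sort (· ≤ ·)) with hl
        set q : ℝ := E.cost a / (I * S.card) with hq
        have hqpos : 0 < q := div_pos (hcost a) (mul_pos hI hScard)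
        have hIq : I * q = E.cost a / S.card := by
          rw [hq]; field_simp
        -- every voter of S values a at I
        have hSval : ∀ j ∈ S, srxU E st.1 j a = I := by
          intro j hj
          have hdes : a ∈ (E.pref j).desired := hco.2.1 j hj haT
          obtain ⟨g, hg, hag⟩ := (VoterPref.mem_desired_iff _ a).mp hdes
          have hgP : g ∈ P := hglobal.2.2.2 j hg
          have hgB : g ∩ st.1 = ∅ := by
            apply Finset.eq_empty_iff_forall_notMem.mpr
            intro x hx
            rw [Finset.mem_inter] at hx
            exact (mem_Tleft.mp haTl).2 g hgP hag x hx.1 hx.2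
          exact VoterPref.margUtil_eq_I_of_untouched (E.pref j) (hvalid j) (hfirst j)
            hg hag haB hgB
        -- every voter of S has enough budget left
        have hSbud : ∀ j ∈ S, E.cost a / S.card ≤ st.2 j := by
          intro j hj
          have hihj := ih hle' j hj
          set kj := ((E.pref j).desired ∩ st.1).card with hkj
          have hkjle : kj ≤ T.card - 1 := by
            have h1 : kj ≤ ((E.pref j).desired ∩ (state E (srxU E) t).1).card :=
              Finset.card_le_card (Finset.inter_subset_inter_left
                (state_fst_mono E (srxU E) hle'))
            have h2 := hlt j hj
            omega
          have hmono : cheapestSum E.cost T kj ≤ cheapestSum E.cost T (T.card - 1) :=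
            cheapestSum_mono E.cost T (fun x _ => le_of_lt (hcost x)) hkjle
          have hsum : cheapestSum E.cost T T.card =
              cheapestSum E.cost T (T.card - 1) +
                l.get ⟨T.card - 1, by rw [hl, length_sortedCosts]; omega⟩ := by
            have := cheapestSum_succ E.cost T (k := T.card - 1) (by omega)
            rw [← this]
            congr 1
            omega
          have hbudS : cheapestSum E.cost T T.card / S.card ≤
              E.budget / (Fintype.card V : ℝ) := by
            rw [cheapestSum_card]
            rw [div_le_iff₀ hScard]
            exact hco.1
          have hla : E.cost a ≤ l.get ⟨T.card - 1, by rw [hl, length_sortedCosts]; omega⟩ := by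
            calc E.cost a ≤ l.get ⟨k, by rw [hl, length_sortedCosts]; exact hkT⟩ := hacost
              _ ≤ _ := sorted_get_le E.cost T hkT (by omega) (by omega)
          have e1 : cheapestSum E.cost T kj / S.card ≤
              cheapestSum E.cost T (T.card - 1) / S.card :=
            (div_le_div_iff_of_pos_right hScard).mpr hmono
          have e2 : E.cost a / S.card ≤
              l.get ⟨T.card - 1, by rw [hl, length_sortedCosts]; omega⟩ / S.card :=
            (div_le_div_iff_of_pos_right hScard).mpr hla
          have e3 : cheapestSum E.cost T T.card / S.card =
              cheapestSum E.cost T (T.card - 1) / S.card +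
                l.get ⟨T.card - 1, by rw [hl, length_sortedCosts]; omega⟩ / S.card := by
            rw [hsum, add_div]
          linarith
        -- a is affordable at price q
        have haff : Affordable E (srxU E st.1) st.2 a q := by
          refine ⟨le_of_lt hqpos, ?_⟩
          have hterm : ∀ j ∈ S, E.cost a / S.card ≤ min (st.2 j) (srxU E st.1 j a * q) := by
            intro j hj
            rw [hSval j hj, hIq]
            exact le_min (hSbud j hj) (le_refl _)
          have hnn : ∀ j ∈ Finset.univ, j ∉ S → (0:ℝ) ≤ min (st.2 j) (srxU E st.1 j a * q) := by
            intro j _ _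
            exact le_min (hbnn j) (mul_nonneg
              (VoterPref.margUtil_nonneg (E.pref j) (hvalid j) st.1 a) (le_of_lt hqpos))
          calc E.cost a = ∑ _j ∈ S, E.cost a / S.card := by
                rw [Finset.sum_const, nsmul_eq_mul]
                field_simp
            _ ≤ ∑ j ∈ S, min (st.2 j) (srxU E st.1 j a * q) := Finset.sum_le_sum hterm
            _ ≤ ∑ j, min (st.2 j) (srxU E st.1 j a * q) :=
                Finset.sum_le_sum_of_subset_of_nonneg (Finset.subset_univ S) hnn
        -- hence the selected project's price is at most q
        have hqle : qmin E (srxU E st.1) st.2 p ≤ q :=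
          (hpmin a haB ⟨q, haff⟩).trans (qmin_le E _ _ a q haff)
        -- the payment of voter i is at most cost a / |S| ≤ l[k] / |S|
        have hUle : srxU E st.1 i p ≤ I :=
          VoterPref.margUtil_le_I (E.pref i) (hvalid i) (le_of_lt hI) (hfirst i) st.1 p
        have hUnn : 0 ≤ srxU E st.1 i p :=
          VoterPref.margUtil_nonneg (E.pref i) (hvalid i) st.1 p
        have hpay : min (st.2 i) (srxU E st.1 i p * qmin E (srxU E st.1) st.2 p) ≤
            l.get ⟨k, by rw [hl, length_sortedCosts]; exact hkT⟩ / S.card := by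
          calc min (st.2 i) (srxU E st.1 i p * qmin E (srxU E st.1) st.2 p) ≤
              srxU E st.1 i p * qmin E (srxU E st.1) st.2 p := min_le_right _ _
            _ ≤ I * qmin E (srxU E st.1) st.2 p := mul_le_mul_of_nonneg_right hUle hqnn
            _ ≤ I * q := mul_le_mul_of_nonneg_left hqle (le_of_lt hI)
            _ = E.cost a / S.card := hIq
            _ ≤ _ := (div_le_div_iff_of_pos_right hScard).mpr hacost
        have hPsucc : cheapestSum E.cost T (k+1) = cheapestSum E.cost T k +
            l.get ⟨k, by rw [hl, length_sortedCosts]; exact hkT⟩ :=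
          cheapestSum_succ E.cost T hkT
        rw [hcard1]
        have hih := ih hle' i hi
        rw [hPsucc, add_div]
        have : min (st.2 i) (srxU E st.1 i p * qmin E (srxU E st.1) st.2 p) ≤
            l.get ⟨k, by rw [hl, length_sortedCosts]; exact hkT⟩ / S.card := hpay
        linarith
      · -- p is not desired by i : no payment
        have hU0 : srxU E st.1 i p = 0 :=
          VoterPref.margUtil_eq_zero_of_not_desired (E.pref i) hpd
        have hinter : (E.pref i).desired ∩ insert p st.1 = (E.pref i).desired ∩ st.1 := by
          ext x
          simp only [Finset.mem_inter, Finset.mem_insert]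
          constructor
          · rintro ⟨hx, rfl | hx2⟩
            · exact absurd hx hpd
            · exact ⟨hx, hx2⟩
          · rintro ⟨hx, hx2⟩
            exact ⟨hx, Or.inr hx2⟩
        rw [hinter, hU0]
        have : min (st.2 i) (0 * qmin E (srxU E st.1) st.2 p) = 0 := by
          rw [zero_mul]
          exact min_eq_right (hbnn i)
        rw [this]
        have := ih hle' i hi
        linarith


/-- Under global substitutes, for a `T`-cohesive-with-substitutes group `S` and
an SRX execution with `B_t = (state E (srxU E) t).1` and remaining budgets
`(state E (srxU E) t).2`: as long as `T_t ≠ ∅` and every voter of `S` has fewer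
than `|T|` desired selected projects, every voter `i ∈ S` has spent at most
`P(|A(i) ∩ B_t|) / |S|` of her initial budget `L/n`. -/
theorem srx_spending_bound
    {V A : Type*} [Fintype V] [Fintype A] [DecidableEq A] [LinearOrder A]
    (E : PB V A) (P : Finset (Finset A)) (I : ℝ)
    (hV : 0 < Fintype.card V)
    (hcost : ∀ p : A, 0 < E.cost p)
    (hbudget : 0 < E.budget)
    (hvalid : ∀ i : V, (E.pref i).Valid)
    (hI : 0 < I)
    (hfirst : ∀ i : V, ∀ g ∈ (E.pref i).parts, (E.pref i).margU g 1 = I)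
    (hglobal : GlobalSubs E P)
    (S : Finset V) (T : Finset A)
    (hco : TCohesiveSub E S T)
    (t : ℕ)
    (hTt : (Tleft P T (state E (srxU E) t).1).Nonempty)
    (hlt : ∀ i ∈ S, ((E.pref i).desired ∩ (state E (srxU E) t).1).card < T.card) :
    ∀ i ∈ S,
      E.budget / (Fintype.card V : ℝ) - (state E (srxU E) t).2 i ≤
        cheapestSum E.cost T ((E.pref i).desired ∩ (state E (srxU E) t).1).card /
          (S.card : ℝ) :=
  srx_invariant E P I hV hcost hbudget hvalid hI hfirst hglobal S T hco t hTt hlt t le_rfl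
end
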